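/- Let p = 1/5. Define the linear maps L_i : V → V by L_i(w) = proj(C_i w) for i = 1,2,3 (these are well defined since (1,1,1) is a common eigenvector of C₁, C₂, C₃ with eigenvalue 1/5 when p = 1/5). Then the family {L₁, L₂, L₃} is strongly irreducible on V: there is no nonempty finite collection of one-dimensional linear subspaces W₁, …, W_m of V such that every L_i maps the union W₁ ∪ ⋯ ∪ W_m into W₁ ∪ ⋯ ∪ W_m. -/

import Mathlib

open Matrix MeasureTheory Filter
open scoped ENNReal

noncomputable section

abbrev E3 : Type := EuclideanSpace ℝ (Fin 3)
abbrev Mat3 : Type := Matrix (Fin 3) (Fin 3) ℝ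

/-- The action of a matrix on Euclidean 3-space. -/
noncomputable def matApply (A : Mat3) (x : E3) : E3 := Matrix.toEuclideanCLM (𝕜 := ℝ) A x

/-- The largest singular value `α₁(A) = ‖A‖` (Euclidean operator norm). -/
noncomputable def sv1 (A : Mat3) : ℝ := ‖Matrix.toEuclideanCLM (𝕜 := ℝ) A‖

/-- The smallest singular value `α₃(A) = ‖A⁻¹‖⁻¹`. -/
noncomputable def sv3 (A : Mat3) : ℝ := (‖Matrix.toEuclideanCLM (𝕜 := ℝ) A⁻¹‖)⁻¹

/-- The middle singular value `α₂(A) = |det A| / (α₁(A) α₃(A))`. -/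
noncomputable def sv2 (A : Mat3) : ℝ := |A.det| / (sv1 A * sv3 A)

/-- Falconer's singular value function `φ^s(A)`. -/
noncomputable def svf (s : ℝ) (A : Mat3) : ℝ :=
  if s ≤ 1 then (sv1 A) ^ s
  else if s ≤ 2 then sv1 A * (sv2 A) ^ (s - 1)
  else if s ≤ 3 then sv1 A * sv2 A * (sv3 A) ^ (s - 2)
  else (sv1 A * sv2 A * sv3 A) ^ (s / 3)

/-- The three matrices `C₁, C₂, C₃` (with 0-based indexing). -/
def Cmat (p : ℝ) : Fin 3 → Mat3 :=
  ![!![1 - 2*p, -p, -p; 0, p, 0; 0, 0, p],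
    !![p, 0, 0; -p, 1 - 2*p, -p; 0, 0, p],
    !![p, 0, 0; 0, p, 0; -p, -p, 1 - 2*p]]

/-- The product `C_w = C_{j₁} ⋯ C_{jₙ}` along a word `w = (j₁, …, jₙ)`. -/
noncomputable def Cword (p : ℝ) {n : ℕ} (w : Fin n → Fin 3) : Mat3 :=
  ((List.ofFn w).map (Cmat p)).prod

/-- standard basis vectors of `E3` -/
noncomputable def eVec (i : Fin 3) : E3 := EuclideanSpace.single i 1

/-- The affine map `G_i(x) = C_i x + 2p·e_i`. -/
noncomputable def Gmap (p : ℝ) (i : Fin 3) (x : E3) : E3 :=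
  matApply (Cmat p i) x + (2 * p) • eVec i

/-- The composition `G_w = G_{j₁} ∘ ⋯ ∘ G_{jₙ}` along a word `w = (j₁, …, jₙ)`. -/
noncomputable def Gword (p : ℝ) {n : ℕ} (w : Fin n → Fin 3) : E3 → E3 :=
  ((List.ofFn w).map (Gmap p)).foldr (· ∘ ·) id

/-- Summability of the double series `Σ_{n=1}^∞ Σ_{w ∈ {1,2,3}ⁿ} φ^s(C_w)`
(all terms are nonnegative, so summability is equivalent to finiteness of the sum). -/
def seriesSummable (p s : ℝ) : Prop :=
  Summable (fun x : Σ n : ℕ, (Fin (n+1) → Fin 3) => svf s (Cword p x.2))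

/-- The affinity dimension `s₀ = inf{s > 0 : Σ_n Σ_w φ^s(C_w) < ∞}`. -/
noncomputable def s0 (p : ℝ) : ℝ := sInf {s : ℝ | 0 < s ∧ seriesSummable p s}

/-- The minimal number of balls of radius `δ` needed to cover `A`. -/
noncomputable def coverNum (A : Set E3) (δ : ℝ) : ℕ :=
  sInf {n : ℕ | ∃ t : Finset E3, t.card = n ∧ A ⊆ ⋃ x ∈ t, Metric.ball x δ}

/-- The upper box-counting dimension `limsup_{δ→0⁺} log N_δ(A) / (−log δ)`. -/
noncomputable def upperBoxDim (A : Set E3) : ℝ :=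
  Filter.limsup (fun δ : ℝ => Real.log (coverNum A δ) / (-Real.log δ))
    (nhdsWithin 0 (Set.Ioi 0))

/-- The vector `(1,1,1)`. -/
noncomputable def onesVec : E3 := (WithLp.equiv 2 (Fin 3 → ℝ)).symm ![1, 1, 1]

/-- Orthogonal projection of `ℝ³` onto the plane `V = {x : x₁ + x₂ + x₃ = 0}`. -/
noncomputable def projV (x : E3) : E3 := x - (((x 0) + (x 1) + (x 2)) / 3) • onesVec

/-- The vector `(a,b,c)` in `E3`. -/
noncomputable def vec3 (a b c : ℝ) : E3 := (WithLp.equiv 2 (Fin 3 → ℝ)).symm ![a, b, c]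

/-- The triangle `T₀ = conv{e₁, e₂, e₃}`. -/
noncomputable def T0set : Set E3 := convexHull ℝ {eVec 0, eVec 1, eVec 2}

/-- The standard tetrahedron `W = conv{0, e₁, e₂, e₃}`. -/
noncomputable def Wset : Set E3 := convexHull ℝ {0, eVec 0, eVec 1, eVec 2}

/-- The triangle `T_ε = conv{(1−2ε,ε,ε), (ε,1−2ε,ε), (ε,ε,1−2ε)}`. -/
noncomputable def Ttri (ε : ℝ) : Set E3 :=
  convexHull ℝ {vec3 (1 - 2*ε) ε ε, vec3 ε (1 - 2*ε) ε, vec3 ε ε (1 - 2*ε)}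

lemma matApply_apply' (A : Mat3) (x : E3) (j : Fin 3) :
    matApply A x j = A.mulVec (fun i => x i) j := by
  have h2 := congrFun (Matrix.ofLp_toEuclideanCLM (𝕜 := ℝ) A x) j
  simpa [matApply] using h2

lemma projV_apply' (x : E3) (j : Fin 3) :
    projV x j = x j - ((x 0 + x 1 + x 2) / 3) := by
  have h1 : onesVec j = 1 := by fin_cases j <;> simp [onesVec]
  simp [projV, h1]

lemma Lcomp' (i j : Fin 3) (x : E3) :
    projV (matApply (Cmat (1/5) i) x) j =
      !![(2*x 0 - x 1 - x 2)/5, (x 1 - x 0)/5, (x 2 - x 0)/5;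
         (x 0 - x 1)/5, (2*x 1 - x 0 - x 2)/5, (x 2 - x 1)/5;
         (x 0 - x 2)/5, (x 1 - x 2)/5, (2*x 2 - x 0 - x 1)/5] i j := by
  rw [projV_apply']
  fin_cases i <;> fin_cases j <;>
    simp [matApply_apply', Cmat, Matrix.mulVec, dotProduct, Fin.sum_univ_three,
      Matrix.vecHead, Matrix.vecTail] <;> ring

lemma rank_one_dep' {W : Submodule ℝ E3} (hr : Module.finrank ℝ W = 1)
    {x y : E3} (hx : x ∈ W) (hy : y ∈ W) (hx0 : x ≠ 0) : ∃ c : ℝ, y = c • x := by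
  obtain ⟨v, hv, hvs⟩ := finrank_eq_one_iff'.mp hr
  obtain ⟨a, ha⟩ := hvs ⟨x, hx⟩
  obtain ⟨b, hb⟩ := hvs ⟨y, hy⟩
  have ha' : a • (v : E3) = x := congrArg Subtype.val ha
  have hb' : b • (v : E3) = y := congrArg Subtype.val hb
  have hane : a ≠ 0 := by
    rintro rfl; rw [zero_smul] at ha'; exact hx0 ha'.symm
  refine ⟨b / a, ?_⟩
  rw [← ha', ← hb', smul_smul, div_mul_cancel₀ _ hane]


/-- Lemma (for `p = 1/5` the projected family is strongly irreducible on the plane `V`). -/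
theorem proj_family_strongly_irreducible :
    ¬ ∃ (m : ℕ) (Ws : Fin m → Submodule ℝ E3), 0 < m ∧
      (∀ k, (∀ x ∈ Ws k, x 0 + x 1 + x 2 = 0) ∧ Module.finrank ℝ (Ws k) = 1) ∧
      (∀ i : Fin 3, ∀ x : E3, (∃ k, x ∈ Ws k) →
        ∃ k, projV (matApply (Cmat (1/5) i) x) ∈ Ws k) := by
  rintro ⟨m, Ws, hm, hW, hinv⟩
  -- every nonzero vector in the union has x 0 = 0 or x 0 + 2 x 2 = 0
  have claim : ∀ x : E3, (∃ k, x ∈ Ws k) → x 0 = 0 ∨ x 0 + 2 * x 2 = 0 := by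
    intro x hx
    by_contra hcon
    push_neg at hcon
    obtain ⟨hα, hδ⟩ := hcon
    set f : ℕ → E3 := fun n => (fun y => projV (matApply (Cmat (1/5) 0) y))^[n] x with hf
    have key : ∀ n, (∃ k, f n ∈ Ws k) ∧ f n 0 = (3/5)^n * x 0 ∧
        f n 0 + 2 * f n 2 = (1/5)^n * (x 0 + 2 * x 2) := by
      intro n
      induction n with
      | zero =>
        refine ⟨by simpa [hf] using hx, by simp [hf], by simp [hf]⟩
      | succ n ih =>
        obtain ⟨⟨k, hk⟩, ha, hd⟩ := ih
        have hs : f n 0 + f n 1 + f n 2 = 0 := (hW k).1 _ hk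
        have hstep : f (n+1) = projV (matApply (Cmat (1/5) 0) (f n)) := by
          rw [hf]; exact Function.iterate_succ_apply' _ _ _
        have h0 : f (n+1) 0 = (2 * f n 0 - f n 1 - f n 2)/5 := by
          rw [hstep]; simpa using Lcomp' 0 0 (f n)
        have h2 : f (n+1) 2 = (f n 2 - f n 0)/5 := by
          rw [hstep]; simpa using Lcomp' 0 2 (f n)
        refine ⟨hstep ▸ hinv 0 (f n) ⟨k, hk⟩, ?_, ?_⟩
        · rw [h0, pow_succ]
          linarith [ha, hs]
        · rw [h0, h2, pow_succ]
          linarith [hd, hs]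
    have H : ∀ a b : ℕ, a < b →
        (∃ k, f a ∈ Ws k ∧ f b ∈ Ws k) → False := by
      intro a b hab ⟨k, hka, hkb⟩
      have hfa0 : f a ≠ 0 := by
        intro h
        have hk0 := (key a).2.1
        rw [h] at hk0
        have hz : (3/5:ℝ)^a * x 0 = 0 := by
          have : ((0 : E3)) 0 = (0:ℝ) := rfl
          rw [this] at hk0
          linarith
        rcases mul_eq_zero.mp hz with h' | h'
        · exact pow_ne_zero a (by norm_num : (3/5:ℝ) ≠ 0) h'
        · exact hα h'
      obtain ⟨c, hc⟩ := rank_one_dep' (hW k).2 hka hkb hfa0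
      have e0 : f b 0 = c * f a 0 := by rw [hc]; simp
      have e2 : f b 2 = c * f a 2 := by rw [hc]; simp
      obtain ⟨d, rfl⟩ : ∃ d, b = a + (d + 1) := ⟨b - a - 1, by omega⟩
      have h35 : (3/5 : ℝ)^a ≠ 0 := pow_ne_zero _ (by norm_num)
      have h15 : (1/5 : ℝ)^a ≠ 0 := pow_ne_zero _ (by norm_num)
      have hc1 : c = (3/5 : ℝ)^(d+1) := by
        have hb := (key (a + (d+1))).2.1
        rw [e0, (key a).2.1, pow_add] at hb
        have h1 : (c * (3/5 : ℝ)^a) * x 0 = ((3/5 : ℝ)^(d+1) * (3/5)^a) * x 0 := by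
          linear_combination hb
        exact mul_right_cancel₀ h35 (mul_right_cancel₀ hα h1)
      have hc2 : c = (1/5 : ℝ)^(d+1) := by
        have hb := (key (a + (d+1))).2.2
        rw [e0, e2, pow_add] at hb
        have h1 : (c * (1/5 : ℝ)^a) * (x 0 + 2 * x 2) =
            ((1/5 : ℝ)^(d+1) * (1/5)^a) * (x 0 + 2 * x 2) := by
          linear_combination hb - c * (key a).2.2
        exact mul_right_cancel₀ h15 (mul_right_cancel₀ hδ h1)
      have : (1/5 : ℝ)^(d+1) < (3/5 : ℝ)^(d+1) := by
        apply pow_lt_pow_left₀ (by norm_num) (by norm_num)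
        exact Nat.succ_ne_zero d
      rw [hc1] at hc2
      linarith
    set g : ℕ → Fin m := fun n => (key n).1.choose with hg
    have hgs : ∀ n, f n ∈ Ws (g n) := fun n => (key n).1.choose_spec
    obtain ⟨a, b, hab, hgab⟩ := Finite.exists_ne_map_eq_of_infinite g
    rcases hab.lt_or_gt with h | h
    · exact H a b h ⟨g a, hgs a, hgab ▸ hgs b⟩
    · exact H b a h ⟨g b, hgs b, hgab ▸ hgs a⟩
  -- now derive contradiction
  have hk0 : Ws ⟨0, hm⟩ ≠ ⊥ := by
    intro h
    have := (hW ⟨0, hm⟩).2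
    rw [h] at this
    simp at this
  obtain ⟨x, hx, hx0⟩ := Submodule.exists_mem_ne_zero_of_ne_bot hk0
  have hs : x 0 + x 1 + x 2 = 0 := (hW ⟨0, hm⟩).1 x hx
  have hext : x 0 = 0 → x 2 = 0 → False := by
    intro h0 h2
    apply hx0
    have h1 : x 1 = 0 := by linarith
    ext j
    fin_cases j <;> simpa
  rcases claim x ⟨⟨0, hm⟩, hx⟩ with h1 | h2
  · -- x = (0, t, -t)
    have hy := hinv 1 x ⟨⟨0, hm⟩, hx⟩
    set y := projV (matApply (Cmat (1/5) 1) x) with hy'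
    have y0 : y 0 = (x 0 - x 1)/5 := by simpa [hy'] using Lcomp' 1 0 x
    have y2 : y 2 = (x 2 - x 1)/5 := by simpa [hy'] using Lcomp' 1 2 x
    have hx2 : x 2 ≠ 0 := fun h => hext h1 h
    rcases claim y hy with hz | hz
    · apply hx2; rw [y0] at hz; linarith
    · apply hx2; rw [y0, y2] at hz; linarith
  · have hx00 : x 0 ≠ 0 := by
      intro h0
      exact hext h0 (by linarith)
    have hy := hinv 2 x ⟨⟨0, hm⟩, hx⟩
    set y := projV (matApply (Cmat (1/5) 2) x) with hy'
    have y0 : y 0 = (x 0 - x 2)/5 := by simpa [hy'] using Lcomp' 2 0 x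
    have y2 : y 2 = (2 * x 2 - x 0 - x 1)/5 := by simpa [hy'] using Lcomp' 2 2 x
    rcases claim y hy with hz | hz
    · apply hx00; rw [y0] at hz; linarith
    · apply hx00; rw [y0, y2] at hz; linarith
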